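/- The set G/U = {(p,q) ∈ (ℂ³∖{0}) × (ℂ³∖{0}) : p₁q₁+p₂q₂+p₃q₃ = 0} is exactly the image of SL(3,ℂ) under the map g ↦ (p(g), q(g)), where p(g) is the first column of g and q(g) is the vector of 2×2 cofactors (q₁, q₂, q₃) = (x₂y₃−x₃y₂, x₃y₁−x₁y₃, x₁y₂−x₂y₁) built from the first two columns (x, y) of g. -/

import Mathlib

open Matrix

/-- First column of g. -/
def pVec (g : Matrix (Fin 3) (Fin 3) ℂ) : Fin 3 → ℂ := fun i => g i 0

/-- Vector of 2×2 cofactors of the first two columns x, y of g: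
(q₁,q₂,q₃) = (x₂y₃−x₃y₂, x₃y₁−x₁y₃, x₁y₂−x₂y₁). -/
def qVec (g : Matrix (Fin 3) (Fin 3) ℂ) : Fin 3 → ℂ :=
  ![g 1 0 * g 2 1 - g 2 0 * g 1 1,
    g 2 0 * g 0 1 - g 0 0 * g 2 1,
    g 0 0 * g 1 1 - g 1 0 * g 0 1]

lemma exists_g_aux (p q y z : Fin 3 → ℂ)
    (h0 : q 0 = p 1 * y 2 - p 2 * y 1)
    (h1 : q 1 = p 2 * y 0 - p 0 * y 2)
    (h2 : q 2 = p 0 * y 1 - p 1 * y 0)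
    (hz : z 0 * q 0 + z 1 * q 1 + z 2 * q 2 = 1) :
    ∃ g : Matrix.SpecialLinearGroup (Fin 3) ℂ,
      pVec (g : Matrix (Fin 3) (Fin 3) ℂ) = p ∧ qVec (g : Matrix (Fin 3) (Fin 3) ℂ) = q := by
  have hdet : (!![p 0, y 0, z 0; p 1, y 1, z 1; p 2, y 2, z 2] :
      Matrix (Fin 3) (Fin 3) ℂ).det = 1 := by
    simp [Matrix.det_fin_three]
    linear_combination hz - z 0 * h0 - z 1 * h1 - z 2 * h2
  refine ⟨⟨_, hdet⟩, ?_, ?_⟩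
  · funext i
    fin_cases i <;> simp [pVec]
  · funext i
    fin_cases i <;> simp [qVec]
    · linear_combination -h0
    · linear_combination -h1
    · linear_combination -h2

theorem GmodU_orbit_description :
    {pq : (Fin 3 → ℂ) × (Fin 3 → ℂ) |
        pq.1 ≠ 0 ∧ pq.2 ≠ 0 ∧ pq.1 0 * pq.2 0 + pq.1 1 * pq.2 1 + pq.1 2 * pq.2 2 = 0}
      = Set.range (fun g : Matrix.SpecialLinearGroup (Fin 3) ℂ =>
          (pVec (g : Matrix (Fin 3) (Fin 3) ℂ), qVec (g : Matrix (Fin 3) (Fin 3) ℂ))) := by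
  ext ⟨p, q⟩
  simp only [Set.mem_setOf_eq, Set.mem_range, Prod.mk.injEq]
  constructor
  · rintro ⟨hp, hq, hpq⟩
    obtain ⟨i, hi⟩ : ∃ i, p i ≠ 0 := Function.ne_iff.mp hp
    have hy : ∃ y : Fin 3 → ℂ,
        q 0 = p 1 * y 2 - p 2 * y 1 ∧ q 1 = p 2 * y 0 - p 0 * y 2 ∧
        q 2 = p 0 * y 1 - p 1 * y 0 := by
      fin_cases i
      · have hi' : p 0 ≠ 0 := hi
        refine ⟨![0, q 2 / p 0, -(q 1 / p 0)], ?_, ?_, ?_⟩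
        · simp only [Matrix.cons_val_zero, Matrix.cons_val_one, Matrix.head_cons,
            Matrix.cons_val_two, Matrix.tail_cons]
          field_simp
          linear_combination hpq
        · simp; field_simp
        · simp; field_simp
      · have hi' : p 1 ≠ 0 := hi
        refine ⟨![-(q 2 / p 1), 0, q 0 / p 1], ?_, ?_, ?_⟩
        · simp; field_simp
        · simp only [Matrix.cons_val_zero, Matrix.cons_val_one, Matrix.head_cons,
            Matrix.cons_val_two, Matrix.tail_cons]
          field_simp
          linear_combination hpq
        · simp; field_simp
      · have hi' : p 2 ≠ 0 := hi
        refine ⟨![q 1 / p 2, -(q 0 / p 2), 0], ?_, ?_, ?_⟩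
        · simp; field_simp
        · simp; field_simp
        · simp only [Matrix.cons_val_zero, Matrix.cons_val_one, Matrix.head_cons,
            Matrix.cons_val_two, Matrix.tail_cons]
          field_simp
          linear_combination hpq
    obtain ⟨y, h0, h1, h2⟩ := hy
    obtain ⟨j, hj⟩ : ∃ j, q j ≠ 0 := Function.ne_iff.mp hq
    have hz : ∃ z : Fin 3 → ℂ, z 0 * q 0 + z 1 * q 1 + z 2 * q 2 = 1 := by
      fin_cases j
      · have hj' : q 0 ≠ 0 := hj
        exact ⟨![1 / q 0, 0, 0], by simp; field_simp⟩
      · have hj' : q 1 ≠ 0 := hj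
        exact ⟨![0, 1 / q 1, 0], by simp; field_simp⟩
      · have hj' : q 2 ≠ 0 := hj
        exact ⟨![0, 0, 1 / q 2], by simp; field_simp⟩
    obtain ⟨z, hz⟩ := hz
    obtain ⟨g, hg1, hg2⟩ := exists_g_aux p q y z h0 h1 h2 hz
    exact ⟨g, hg1, hg2⟩
  · rintro ⟨g, hg1, hg2⟩
    have hdet : (g : Matrix (Fin 3) (Fin 3) ℂ).det = 1 := g.2
    rw [Matrix.det_fin_three] at hdet
    subst hg1 hg2
    refine ⟨?_, ?_, ?_⟩
    · intro h
      have h' : ∀ i, (g : Matrix (Fin 3) (Fin 3) ℂ) i 0 = 0 := fun i => congrFun h i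
      rw [h' 0, h' 1, h' 2] at hdet
      simp at hdet
    · intro h
      have h0 := congrFun h 0
      have h1 := congrFun h 1
      have h2 := congrFun h 2
      simp only [qVec, Matrix.cons_val_zero, Matrix.cons_val_one, Matrix.head_cons,
        Matrix.cons_val_two, Matrix.tail_cons, Pi.zero_apply] at h0 h1 h2
      apply one_ne_zero (α := ℂ)
      rw [← hdet]
      linear_combination (g : Matrix (Fin 3) (Fin 3) ℂ) 0 2 * h0 +
        (g : Matrix (Fin 3) (Fin 3) ℂ) 1 2 * h1 +
        (g : Matrix (Fin 3) (Fin 3) ℂ) 2 2 * h2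
    · simp only [pVec, qVec, Matrix.cons_val_zero, Matrix.cons_val_one, Matrix.head_cons,
        Matrix.cons_val_two, Matrix.tail_cons]
      ring
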